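/- Let d ∈ ℕ, let A_0, A_1, …, A_d, B, C ∈ ℝ with A_j ≥ 0, B ≥ 0, C ≥ 0, and let D ∈ ℝ with D > 0. Assume that A_j^n · B ≤ C · D^n · (n!)² for every j ∈ {0,1,…,d} and every n ∈ ℕ ∪ {0}. Then B ≤ 4·C·exp(−Σ_{j=0}^{d} (A_j / ((d+1)²·D))^{1/2}). -/

import Mathlib

lemma fac_even (n : ℕ) : n.factorial ^ 2 * 2 ^ n ≤ (2 * n).factorial := by
  induction n with
  | zero => simp
  | succ k ih =>
    have h2 : 2 * (k + 1) = 2 * k + 1 + 1 := by ring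
    rw [h2, Nat.factorial_succ, Nat.factorial_succ]
    calc (k + 1).factorial ^ 2 * 2 ^ (k + 1)
        = (k.factorial ^ 2 * 2 ^ k) * (2 * (k + 1) ^ 2) := by
          rw [Nat.factorial_succ]; ring
      _ ≤ (2 * k).factorial * (2 * (k + 1) ^ 2) := Nat.mul_le_mul_right _ ih
      _ ≤ (2 * k).factorial * ((2 * k + 1 + 1) * (2 * k + 1)) :=
          Nat.mul_le_mul_left _ (by nlinarith)
      _ = (2 * k + 1 + 1) * ((2 * k + 1) * (2 * k).factorial) := by ring

lemma fac_odd (n : ℕ) : n.factorial * (n + 1).factorial * 2 ^ n ≤ (2 * n + 1).factorial := by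
  induction n with
  | zero => simp
  | succ k ih =>
    have h2 : 2 * (k + 1) + 1 = 2 * k + 1 + 1 + 1 := by ring
    rw [h2, Nat.factorial_succ, Nat.factorial_succ]
    calc (k + 1).factorial * (k + 1 + 1).factorial * 2 ^ (k + 1)
        = (k.factorial * (k + 1).factorial * 2 ^ k) * (2 * (k + 1 + 1) * (k + 1)) := by
          rw [Nat.factorial_succ (k+1), Nat.factorial_succ k]; ring
      _ ≤ (2 * k + 1).factorial * (2 * (k + 1 + 1) * (k + 1)) := Nat.mul_le_mul_right _ ih
      _ ≤ (2 * k + 1).factorial * ((2 * k + 1 + 1 + 1) * (2 * k + 1 + 1)) :=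
          Nat.mul_le_mul_left _ (by nlinarith)
      _ = (2 * k + 1 + 1 + 1) * ((2 * k + 1 + 1) * (2 * k + 1).factorial) := by ring

lemma key_single (t B C : ℝ) (ht : 0 ≤ t) (hB : 0 ≤ B) (hC : 0 ≤ C)
    (h : ∀ n : ℕ, t ^ (2 * n) * B ≤ C * (n.factorial : ℝ) ^ 2) :
    B ≤ 4 * C * Real.exp (-t) := by
  -- odd-power bound
  have hodd : ∀ n : ℕ, t ^ (2 * n + 1) * B ≤ C * (n.factorial : ℝ) * ((n + 1).factorial : ℝ) := by
    intro n
    have h1 := h n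
    have h2 := h (n + 1)
    have hx : (0:ℝ) ≤ t ^ (2 * n + 1) * B := by positivity
    have hy : (0:ℝ) ≤ C * (n.factorial : ℝ) * ((n + 1).factorial : ℝ) := by positivity
    have hsq : (t ^ (2 * n + 1) * B) ^ 2 ≤ (C * (n.factorial : ℝ) * ((n + 1).factorial : ℝ)) ^ 2 := by
      have e : (t ^ (2 * n + 1) * B) ^ 2 = (t ^ (2 * n) * B) * (t ^ (2 * (n + 1)) * B) := by ring
      rw [e]
      calc (t ^ (2 * n) * B) * (t ^ (2 * (n + 1)) * B)
          ≤ (C * (n.factorial : ℝ) ^ 2) * (C * (((n+1).factorial : ℝ)) ^ 2) := by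
            apply mul_le_mul h1 h2 (by positivity) (by positivity)
        _ = (C * (n.factorial : ℝ) * ((n + 1).factorial : ℝ)) ^ 2 := by ring
    nlinarith [hsq, hx, hy]
  -- per-pair partial sum bound
  have hmain : ∀ N : ℕ, B * (∑ m ∈ Finset.range (2 * N), t ^ m / (m.factorial : ℝ))
      ≤ 4 * C * (1 - (1/2 : ℝ) ^ N) := by
    intro N
    induction N with
    | zero => simp
    | succ k ih =>
      have h2 : 2 * (k + 1) = 2 * k + 1 + 1 := by ring
      rw [h2, Finset.sum_range_succ, Finset.sum_range_succ]
      have heN : B * (t ^ (2 * k) / ((2 * k).factorial : ℝ)) ≤ C * (1/2 : ℝ) ^ k := by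
        rw [mul_div_assoc', div_le_iff₀ (by positivity)]
        have hfe : ((k.factorial : ℝ) ^ 2 * 2 ^ k) ≤ ((2 * k).factorial : ℝ) := by
          exact_mod_cast fac_even k
        have hk := h k
        calc B * t ^ (2 * k) = t ^ (2 * k) * B := by ring
          _ ≤ C * (k.factorial : ℝ) ^ 2 := hk
          _ = C * (1/2 : ℝ) ^ k * ((k.factorial : ℝ) ^ 2 * 2 ^ k) := by
              rw [one_div, inv_pow]; field_simp
          _ ≤ C * (1/2 : ℝ) ^ k * ((2 * k).factorial : ℝ) := by
              apply mul_le_mul_of_nonneg_left hfe (by positivity)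
      have hoN : B * (t ^ (2 * k + 1) / ((2 * k + 1).factorial : ℝ)) ≤ C * (1/2 : ℝ) ^ k := by
        rw [mul_div_assoc', div_le_iff₀ (by positivity)]
        have hfo : ((k.factorial : ℝ) * ((k + 1).factorial : ℝ) * 2 ^ k)
            ≤ ((2 * k + 1).factorial : ℝ) := by exact_mod_cast fac_odd k
        calc B * t ^ (2 * k + 1) = t ^ (2 * k + 1) * B := by ring
          _ ≤ C * (k.factorial : ℝ) * ((k + 1).factorial : ℝ) := hodd k
          _ = C * (1/2 : ℝ) ^ k * ((k.factorial : ℝ) * ((k + 1).factorial : ℝ) * 2 ^ k) := by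
              rw [one_div, inv_pow]; field_simp
          _ ≤ C * (1/2 : ℝ) ^ k * ((2 * k + 1).factorial : ℝ) := by
              apply mul_le_mul_of_nonneg_left hfo (by positivity)
      have : (1/2 : ℝ) ^ (k + 1) = (1/2 : ℝ) ^ k * (1/2) := by ring
      rw [this]
      nlinarith [heN, hoN, ih]
  -- pass to the limit
  have hsum : HasSum (fun n : ℕ => t ^ n / (n.factorial : ℝ)) (Real.exp t) := by
    rw [Real.exp_eq_exp_ℝ, NormedSpace.exp_eq_tsum_div]
    exact (NormedSpace.expSeries_div_summable t).hasSum
  have htend : Filter.Tendsto (fun N : ℕ => B * ∑ m ∈ Finset.range (2 * N), t ^ m / (m.factorial : ℝ))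
      Filter.atTop (nhds (B * Real.exp t)) := by
    apply Filter.Tendsto.const_mul
    exact hsum.tendsto_sum_nat.comp
      (Filter.tendsto_atTop_atTop.2 fun b => ⟨b, fun a ha => by omega⟩)
  have hBe : B * Real.exp t ≤ 4 * C :=
    le_of_tendsto htend (Filter.Eventually.of_forall fun N => le_trans (hmain N)
      (by nlinarith [pow_nonneg (by norm_num : (0:ℝ) ≤ 1/2) N]))
  have hept : 0 < Real.exp t := Real.exp_pos t
  rw [Real.exp_neg]
  calc B = B * Real.exp t * (Real.exp t)⁻¹ := by field_simp
    _ ≤ 4 * C * (Real.exp t)⁻¹ := mul_le_mul_of_nonneg_right hBe (by positivity)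

/-- Lemma 7.2 (tool for decay bounds): if `A_j^n B ≤ C D^n (n!)²` for all `j` and `n`, then
`B ≤ 4 C exp(-Σ_j (A_j/((d+1)² D))^{1/2})`. -/
theorem decay_bound_tool (d : ℕ) (A : Fin (d + 1) → ℝ) (B C D : ℝ)
    (hA : ∀ j, 0 ≤ A j) (hB : 0 ≤ B) (hC : 0 ≤ C) (hD : 0 < D)
    (h : ∀ (j : Fin (d + 1)) (n : ℕ), A j ^ n * B ≤ C * D ^ n * (n.factorial : ℝ) ^ 2) :
    B ≤ 4 * C *
      Real.exp (-(∑ j : Fin (d + 1), Real.sqrt (A j / (((d : ℝ) + 1) ^ 2 * D)))) := by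
  set t : Fin (d + 1) → ℝ := fun j => Real.sqrt (A j / D) with ht
  have htn : ∀ j, 0 ≤ t j := fun j => Real.sqrt_nonneg _
  -- single-j bound
  have hsingle : ∀ j, B ≤ 4 * C * Real.exp (-(t j)) := by
    intro j
    apply key_single _ _ _ (htn j) hB hC
    intro n
    have : t j ^ (2 * n) = (A j / D) ^ n := by
      rw [pow_mul, Real.sq_sqrt (div_nonneg (hA j) hD.le)]
    rw [this]
    have hDn : (0:ℝ) < D ^ n := by positivity
    rw [div_pow, div_mul_eq_mul_div, div_le_iff₀ hDn]
    calc A j ^ n * B ≤ C * D ^ n * (n.factorial : ℝ) ^ 2 := h j n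
      _ = C * (n.factorial : ℝ) ^ 2 * D ^ n := by ring
  -- take maximal t j
  obtain ⟨j₀, _, hj₀⟩ := Finset.exists_max_image Finset.univ t ⟨0, Finset.mem_univ 0⟩
  -- sum bound
  have hsumle : (∑ j : Fin (d + 1), Real.sqrt (A j / (((d : ℝ) + 1) ^ 2 * D))) ≤ t j₀ := by
    have heq : ∀ j : Fin (d + 1), Real.sqrt (A j / (((d : ℝ) + 1) ^ 2 * D))
        = t j / ((d : ℝ) + 1) := by
      intro j
      have : A j / (((d : ℝ) + 1) ^ 2 * D) = (A j / D) / ((d : ℝ) + 1) ^ 2 := by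
        rw [div_div, mul_comm D]
      rw [this, ht, Real.sqrt_div (div_nonneg (hA j) hD.le),
        Real.sqrt_sq (by positivity : (0:ℝ) ≤ (d : ℝ) + 1)]
    calc (∑ j : Fin (d + 1), Real.sqrt (A j / (((d : ℝ) + 1) ^ 2 * D)))
        = ∑ j : Fin (d + 1), t j / ((d : ℝ) + 1) := by
          exact Finset.sum_congr rfl fun j _ => heq j
      _ ≤ ∑ _j : Fin (d + 1), t j₀ / ((d : ℝ) + 1) := by
          apply Finset.sum_le_sum
          intro j _
          exact div_le_div_of_nonneg_right (hj₀ j (Finset.mem_univ j)) (by positivity)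
      _ = t j₀ := by
          rw [Finset.sum_const, Finset.card_univ, Fintype.card_fin, nsmul_eq_mul]
          push_cast
          field_simp
  calc B ≤ 4 * C * Real.exp (-(t j₀)) := hsingle j₀
    _ ≤ 4 * C * Real.exp (-(∑ j : Fin (d + 1), Real.sqrt (A j / (((d : ℝ) + 1) ^ 2 * D)))) := by
        apply mul_le_mul_of_nonneg_left (Real.exp_le_exp.2 (by linarith)) (by positivity)
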